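/- Let S[1..n] end with a unique terminator. Define the sequential construction: start with a trie containing only the root; for i = 1 to n, insert a new node whose path label is the shortest prefix of S[i..n] that is not already a path label in the current trie, and label it i. Then this insertion is always well-defined (such a shortest absent prefix always exists) and the resulting trie is a position heap for S. -/

import Mathlib

/-- One step of the sequential construction: insert the shortest prefix of
`S.drop i` (the suffix starting at position `i + 1`, 1-indexed) that is absent
from the current trie `N`.  `List.inits` lists prefixes in increasing length,
so `find?` returns the shortest absent one. -/
def posHeapStep {α : Type} [DecidableEq α]
    (S : List α) (N : Finset (List α)) (i : ℕ) : Finset (List α) :=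
  match ((S.drop i).inits).find? (fun p => decide (p ∉ N)) with
  | some p => insert p N
  | none => N

/-- The trie after processing positions `1, ..., i` (starting from the root). -/
def posHeapBuild {α : Type} [DecidableEq α] (S : List α) : ℕ → Finset (List α)
  | 0 => {([] : List α)}
  | i + 1 => posHeapStep S (posHeapBuild S i) i

section Aux
variable {α : Type} [DecidableEq α]

/-- minimality of `find?` over `inits` -/
lemma find?_inits_min {L : List α} {pred : List α → Bool} {p : List α}
    (h : (L.inits).find? pred = some p) :
    ∀ q, q <+: L → q.length < p.length → pred q = false := by
  rw [List.find?_eq_some_iff_getElem] at h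
  obtain ⟨hp, i, hi, hip, hmin⟩ := h
  intro q hq hql
  have hqlen : q.length < L.inits.length := by
    simp [List.length_inits]
    exact hq.length_le
  have hqeq : L.inits[q.length] = q := by
    rw [List.getElem_inits]
    exact (List.prefix_iff_eq_take.mp hq).symm
  have hpi : p = L.take i := by rw [← hip, List.getElem_inits]
  have hplen : p.length ≤ i := by
    rw [hpi, List.length_take]; exact min_le_left _ _
  have := hmin q.length (lt_of_lt_of_le hql hplen)
  rw [hqeq] at this
  simpa using this

lemma step_some {S : List α} {N : Finset (List α)} {i : ℕ} {p : List α}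
    (h : ((S.drop i).inits).find? (fun p => decide (p ∉ N)) = some p) :
    posHeapStep S N i = insert p N ∧ p ∉ N ∧ p <+: S.drop i := by
  refine ⟨by rw [posHeapStep, h], ?_, ?_⟩
  · have := List.find?_some h
    simpa using this
  · have := List.mem_of_find?_eq_some h
    exact List.mem_inits _ _ |>.mp this

lemma build_mono (S : List α) : Monotone (posHeapBuild S) := by
  apply monotone_nat_of_le_succ
  intro i
  rw [posHeapBuild, posHeapStep]
  cases hf : ((S.drop i).inits).find? (fun p => decide (p ∉ posHeapBuild S i)) with
  | some p => exact Finset.subset_insert _ _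
  | none => exact subset_refl _

/-- membership characterization -/
lemma mem_build_iff (S : List α) (i : ℕ) (p : List α) :
    p ∈ posHeapBuild S i ↔ p = [] ∨ ∃ j < i,
      ((S.drop j).inits).find? (fun q => decide (q ∉ posHeapBuild S j)) = some p := by
  induction i with
  | zero => simp [posHeapBuild]
  | succ i ih =>
    rw [posHeapBuild, posHeapStep]
    cases hf : ((S.drop i).inits).find? (fun q => decide (q ∉ posHeapBuild S i)) with
    | some q =>
      simp only [Finset.mem_insert, ih]
      constructor
      · rintro (rfl | rfl | ⟨j, hj, hjf⟩)
        · exact Or.inr ⟨i, Nat.lt_succ_self i, hf⟩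
        · exact Or.inl rfl
        · exact Or.inr ⟨j, hj.trans (Nat.lt_succ_self i), hjf⟩
      · rintro (rfl | ⟨j, hj, hjf⟩)
        · exact Or.inr (Or.inl rfl)
        · rcases Nat.lt_succ_iff_lt_or_eq.mp hj with hj' | rfl
          · exact Or.inr (Or.inr ⟨j, hj', hjf⟩)
          · rw [hf] at hjf; exact Or.inl (Option.some_injective _ hjf).symm
    | none =>
      rw [ih]
      constructor
      · rintro (rfl | ⟨j, hj, hjf⟩)
        · exact Or.inl rfl
        · exact Or.inr ⟨j, hj.trans (Nat.lt_succ_self i), hjf⟩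
      · rintro (rfl | ⟨j, hj, hjf⟩)
        · exact Or.inl rfl
        · rcases Nat.lt_succ_iff_lt_or_eq.mp hj with hj' | rfl
          · exact Or.inr ⟨j, hj', hjf⟩
          · rw [hf] at hjf; exact absurd hjf (by simp)

lemma build_prefix_closed (S : List α) (i : ℕ) :
    ∀ p ∈ posHeapBuild S i, ∀ q, q <+: p → q ∈ posHeapBuild S i := by
  induction i with
  | zero => intro p hp q hq
            simp [posHeapBuild] at hp ⊢
            subst hp
            exact List.prefix_nil.mp hq
  | succ i ih =>
    intro p hp q hq
    rw [posHeapBuild] at hp ⊢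
    cases hf : ((S.drop i).inits).find? (fun r => decide (r ∉ posHeapBuild S i)) with
    | none => rw [posHeapStep, hf] at hp ⊢; exact ih p hp q hq
    | some r =>
      rw [posHeapStep, hf] at hp ⊢
      rcases Finset.mem_insert.mp hp with rfl | hp'
      · -- p = r, q <+: r <+: S.drop i
        rcases eq_or_ne q p with rfl | hne
        · exact Finset.mem_insert_self _ _
        · have hqlen : q.length < p.length :=
            lt_of_le_of_ne hq.length_le (fun h => hne (List.IsPrefix.eq_of_length hq h))
          have hqS : q <+: S.drop i := hq.trans (step_some hf).2.2
          have := find?_inits_min hf q hqS hqlen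
          simp only [decide_eq_false_iff_not, not_not] at this
          exact Finset.mem_insert_of_mem this
      · exact Finset.mem_insert_of_mem (ih p hp' q hq)
end Aux


/-- For `S` ending with a unique terminator, the sequential
construction is always well-defined (at every step a shortest absent prefix of
the current suffix exists), and the resulting trie, with the node inserted at
step `i` labelled `i`, is a position heap for `S`: it is prefix-closed, the
labelling is a bijection onto `{0, ..., n}` with the root labelled `0`, labels
increase from parents to children, and the path label of the node labelled `i`
is a prefix of `S[i..n]`. -/
theorem posHeapBuild_welldefined_and_isPositionHeap
    {α : Type} [DecidableEq α]
    (S T : List α) (c : α) (hS : S = T ++ [c]) (hc : c ∉ T) :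
    (∀ i < S.length, ∃ p : List α,
        ((S.drop i).inits).find? (fun p => decide (p ∉ posHeapBuild S i)) = some p) ∧
    ∃ lab : List α → ℕ,
      lab [] = 0 ∧
      (∀ i < S.length, ∀ p : List α,
        ((S.drop i).inits).find? (fun p => decide (p ∉ posHeapBuild S i)) = some p →
          lab p = i + 1) ∧
      (∀ p ∈ posHeapBuild S S.length, ∀ q : List α, q <+: p → q ∈ posHeapBuild S S.length) ∧
      Set.BijOn lab ↑(posHeapBuild S S.length) (Set.Iic S.length) ∧
      (∀ p ∈ posHeapBuild S S.length, ∀ q ∈ posHeapBuild S S.length,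
        p <+: q → lab p ≤ lab q) ∧
      (∀ p ∈ posHeapBuild S S.length, 1 ≤ lab p → p <+: S.drop (lab p - 1)) := by
  have hn : S.length = T.length + 1 := by simp [hS]
  -- suffixes are not prefixes of earlier suffixes
  have hnotpre : ∀ j i, j < i → i < S.length → ¬ (S.drop i <+: S.drop j) := by
    intro j i hji hi hpre
    have hiT : i ≤ T.length := by omega
    have hjT : j < T.length := by omega
    have hdi : S.drop i = T.drop i ++ [c] := by
      rw [hS, List.drop_append_of_le_length hiT]
    have hdj : S.drop j = T.drop j ++ [c] := by
      rw [hS, List.drop_append_of_le_length (le_of_lt hjT)]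
    have hlen : (S.drop i).length ≤ (T.drop j).length := by
      rw [hdi]; simp; omega
    rw [hdj] at hpre
    have hpre' : S.drop i <+: T.drop j :=
      List.prefix_of_prefix_length_le hpre (List.prefix_append _ _) hlen
    have hcmem : c ∈ S.drop i := by rw [hdi]; simp
    exact hc (List.mem_of_mem_drop (hpre'.subset hcmem))
  -- suffix not in current trie
  have hsufnot : ∀ i < S.length, S.drop i ∉ posHeapBuild S i := by
    intro i hi hmem
    rcases (mem_build_iff S i _).mp hmem with h0 | ⟨j, hj, hjf⟩
    · have : S.drop i ≠ [] := by
        apply List.ne_nil_of_length_pos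
        rw [List.length_drop]; omega
      exact this h0
    · exact hnotpre j i hj hi ((step_some hjf).2.2)
  -- well-definedness
  have hwd : ∀ i < S.length, ∃ p : List α,
      ((S.drop i).inits).find? (fun p => decide (p ∉ posHeapBuild S i)) = some p := by
    intro i hi
    have : (((S.drop i).inits).find? (fun p => decide (p ∉ posHeapBuild S i))).isSome := by
      rw [List.find?_isSome]
      exact ⟨S.drop i, (List.mem_inits _ _).mpr (List.prefix_refl _),
        by simpa using hsufnot i hi⟩
    exact Option.isSome_iff_exists.mp this
  refine ⟨hwd, ?_⟩
  classical
  set lab : List α → ℕ := fun p =>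
    if h : ∃ k, p ∈ posHeapBuild S k then Nat.find h else 0 with hlab
  have hlab_spec : ∀ p (h : ∃ k, p ∈ posHeapBuild S k), lab p = Nat.find h := by
    intro p h; rw [hlab]; simp [h]
  have hlab_nil : lab [] = 0 := by
    have h : ∃ k, ([] : List α) ∈ posHeapBuild S k := ⟨0, by simp [posHeapBuild]⟩
    rw [hlab_spec _ h]
    exact Nat.le_zero.mp (Nat.find_le (by simp [posHeapBuild]))
  have hlab_ins : ∀ i (p : List α),
      ((S.drop i).inits).find? (fun q => decide (q ∉ posHeapBuild S i)) = some p →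
      lab p = i + 1 := by
    intro i p hf
    obtain ⟨hstep, hnot, hpre⟩ := step_some hf
    have hmem : p ∈ posHeapBuild S (i + 1) := by
      rw [posHeapBuild, hstep]; exact Finset.mem_insert_self _ _
    have h : ∃ k, p ∈ posHeapBuild S k := ⟨i + 1, hmem⟩
    rw [hlab_spec _ h]
    rw [Nat.find_eq_iff]
    exact ⟨hmem, fun j hj hmemj => hnot (build_mono S (Nat.lt_succ_iff.mp hj) hmemj)⟩
  -- characterization of lab on members of the final trie
  have hlab_char : ∀ p ∈ posHeapBuild S S.length,
      (p = [] ∧ lab p = 0) ∨ ∃ i < S.length,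
        ((S.drop i).inits).find? (fun q => decide (q ∉ posHeapBuild S i)) = some p
        ∧ lab p = i + 1 := by
    intro p hp
    rcases (mem_build_iff S _ p).mp hp with rfl | ⟨j, hj, hjf⟩
    · exact Or.inl ⟨rfl, hlab_nil⟩
    · exact Or.inr ⟨j, hj, hjf, hlab_ins j p hjf⟩
  refine ⟨lab, hlab_nil, fun i _ p hf => hlab_ins i p hf,
    build_prefix_closed S S.length, ?_, ?_, ?_⟩
  · -- BijOn
    constructor
    · intro p hp
      rcases hlab_char p hp with ⟨_, h0⟩ | ⟨i, hi, _, hi1⟩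
      · simp [h0]
      · simp [hi1]; omega
    constructor
    · intro p hp q hq hpq
      rcases hlab_char p hp with ⟨rfl, h0⟩ | ⟨i, hi, hif, hi1⟩ <;>
        rcases hlab_char q hq with ⟨rfl, h0'⟩ | ⟨j, hj, hjf, hj1⟩
      · rfl
      · rw [h0, hj1] at hpq; omega
      · rw [hi1, h0'] at hpq; omega
      · rw [hi1, hj1] at hpq
        have : i = j := by omega
        subst this
        rw [hif] at hjf
        exact Option.some_injective _ hjf
    · intro m hm
      simp only [Set.mem_Iic] at hm
      rcases Nat.eq_zero_or_pos m with rfl | hm0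
      · exact ⟨[], by
          have : ([] : List α) ∈ posHeapBuild S S.length :=
            build_mono S (Nat.zero_le _) (by simp [posHeapBuild])
          exact ⟨this, hlab_nil⟩⟩
      · obtain ⟨p, hp⟩ := hwd (m - 1) (by omega)
        refine ⟨p, ?_, ?_⟩
        · have hmem : p ∈ posHeapBuild S (m - 1 + 1) := by
            rw [posHeapBuild, (step_some hp).1]; exact Finset.mem_insert_self _ _
          exact build_mono S (by omega) hmem
        · rw [hlab_ins _ _ hp]; omega
  · -- monotone labels along prefixes
    intro p hp q hq hpq
    have hq' : ∃ k, q ∈ posHeapBuild S k := ⟨S.length, hq⟩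
    have hqmem : q ∈ posHeapBuild S (lab q) := by
      rw [hlab_spec _ hq']; exact Nat.find_spec hq'
    have hpmem : p ∈ posHeapBuild S (lab q) :=
      build_prefix_closed S _ q hqmem p hpq
    have hp' : ∃ k, p ∈ posHeapBuild S k := ⟨_, hpmem⟩
    rw [hlab_spec _ hp']
    exact Nat.find_min' hp' hpmem
  · -- path label property
    intro p hp h1
    rcases hlab_char p hp with ⟨rfl, h0⟩ | ⟨i, hi, hif, hi1⟩
    · omega
    · rw [hi1]
      simpa using (step_some hif).2.2
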